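/- arXiv:1902.04017 — 2 statements merged into one kernel-verified Lean document; each statement's English description precedes it below -/
import Mathlib

section
/- Let β, s, s₁ be reals with 0 < s₁ < s. Suppose ω₀, θ₀ are elements of an ordered real vector space with 0 ≤ ω₀ and suppose -R + e^{-s}(R + ω₀) ≥ β·θ₀ (where R is an element of the vector space, i.e., -(1-e^{-s})R ≥ β·θ₀ - e^{-s}·ω₀). Then -(1-e^{-s₁})R + e^{-s₁}·γ₀ ≥ [(1-e^{-s₁})/(1-e^{-s})]·β·θ₀ whenever γ₀ ≥ ω₀. -/
theorem stmt_13 (V : Type*) [AddCommGroup V] [PartialOrder V] [IsOrderedAddMonoid V] [Module ℝ V]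
    [PosSMulStrictMono ℝ V] [PosSMulReflectLT ℝ V]
    (β s s₁ : ℝ) (hs₁ : 0 < s₁) (hss : s₁ < s)
    (ω₀ θ₀ R γ₀ : V) (hω₀ : 0 ≤ ω₀)
    (hpos : -R + Real.exp (-s) • (R + ω₀) ≥ β • θ₀)
    (hγ : γ₀ ≥ ω₀) :
    -((1 - Real.exp (-s₁)) • R) + Real.exp (-s₁) • γ₀ ≥
      (((1 - Real.exp (-s₁)) / (1 - Real.exp (-s))) * β) • θ₀ := by
  set a : ℝ := 1 - Real.exp (-s₁) with ha
  set b : ℝ := 1 - Real.exp (-s) with hb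
  have he₁ : Real.exp (-s₁) < 1 := Real.exp_lt_one_iff.mpr (by linarith)
  have he : Real.exp (-s) < Real.exp (-s₁) := Real.exp_lt_exp.mpr (by linarith)
  have hepos : 0 < Real.exp (-s) := Real.exp_pos _
  have hapos : 0 < a := by simp [ha]; linarith
  have hbpos : 0 < b := by simp [hb]; linarith
  have hab : a < b := by simp [ha, hb]; linarith
  -- multiply hpos by a/b
  have hdiv : 0 ≤ a / b := le_of_lt (div_pos hapos hbpos)
  have h1 : (a / b) • (β • θ₀) ≤ (a / b) • (-R + Real.exp (-s) • (R + ω₀)) :=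
    smul_le_smul_of_nonneg_left hpos hdiv
  rw [smul_smul] at h1
  have hrw : -R + Real.exp (-s) • (R + ω₀) = -(b • R) + Real.exp (-s) • ω₀ := by
    simp [hb, sub_smul, smul_add, one_smul]
    abel
  rw [hrw, smul_add, smul_neg, smul_smul, smul_smul] at h1
  have hba : (a / b) * b = a := div_mul_cancel₀ a (ne_of_gt hbpos)
  rw [hba] at h1
  -- compare the ω₀ term with the γ₀ term
  have hc : (a / b) * Real.exp (-s) ≤ Real.exp (-s₁) := by
    rw [div_mul_eq_mul_div, div_le_iff₀ hbpos]
    simp only [ha, hb]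
    nlinarith [he]
  have h2 : ((a / b) * Real.exp (-s)) • ω₀ ≤ Real.exp (-s₁) • γ₀ := by
    calc ((a / b) * Real.exp (-s)) • ω₀ ≤ Real.exp (-s₁) • ω₀ :=
          smul_le_smul_of_nonneg_right hc hω₀
      _ ≤ Real.exp (-s₁) • γ₀ :=
          smul_le_smul_of_nonneg_left hγ (le_of_lt (Real.exp_pos _))
  calc ((a / b) * β) • θ₀ ≤ -(a • R) + ((a / b) * Real.exp (-s)) • ω₀ := h1
    _ ≤ -(a • R) + Real.exp (-s₁) • γ₀ := by exact add_le_add_right h2 _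
end

section
/- Let f : [0,∞) → ℝ be continuous and suppose there exist 0 < γ₁ < 1 and γ₂ > 0 such that: whenever 0 < α ≤ γ₁ and f(t) ≥ α for all t ∈ [0, γ₂·α^{k}] (k > 0 fixed), it follows that f(t) ≥ γ₁ for all t ∈ [0, γ₂·α^{k}]. If f(0) ≥ σ for some σ > 0, then f(t) ≥ γ₁ for all t ∈ [0, γ₂·γ₁^{k}]. -/
theorem stmt_17 (γ₁ γ₂ k σ : ℝ) (hγ₁ : 0 < γ₁) (hγ₁' : γ₁ < 1) (hγ₂ : 0 < γ₂)
    (hk : 0 < k) (hσ : 0 < σ)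
    (f : ℝ → ℝ) (hf : ContinuousOn f (Set.Ici 0))
    (hboot : ∀ α : ℝ, 0 < α → α ≤ γ₁ →
      (∀ t ∈ Set.Icc (0 : ℝ) (γ₂ * α ^ k), f t ≥ α) →
      (∀ t ∈ Set.Icc (0 : ℝ) (γ₂ * α ^ k), f t ≥ γ₁))
    (hf0 : f 0 ≥ σ) :
    ∀ t ∈ Set.Icc (0 : ℝ) (γ₂ * γ₁ ^ k), f t ≥ γ₁ := by
  have hk' : k ≠ 0 := hk.ne'
  have hT : 0 < γ₂ * γ₁ ^ k := mul_pos hγ₂ (Real.rpow_pos_of_pos hγ₁ k)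
  -- for every v ∈ (0, T], there is α with γ₂ * α ^ k = v
  have hαof : ∀ v : ℝ, 0 < v → v ≤ γ₂ * γ₁ ^ k →
      ∃ α : ℝ, 0 < α ∧ α ≤ γ₁ ∧ γ₂ * α ^ k = v := by
    intro v hv hvT
    refine ⟨(v / γ₂) ^ k⁻¹, Real.rpow_pos_of_pos (div_pos hv hγ₂) _, ?_, ?_⟩
    · have h1 : v / γ₂ ≤ γ₁ ^ k := by
        rw [div_le_iff₀ hγ₂, mul_comm]; exact hvT
      calc (v / γ₂) ^ k⁻¹ ≤ (γ₁ ^ k) ^ k⁻¹ :=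
            Real.rpow_le_rpow (le_of_lt (div_pos hv hγ₂)) h1 (by positivity)
        _ = γ₁ := Real.rpow_rpow_inv hγ₁.le hk'
    · rw [Real.rpow_inv_rpow (le_of_lt (div_pos hv hγ₂)) hk']
      field_simp
  -- monotonicity : α ≤ β (both positive) implies γ₂ α^k ≤ γ₂ β^k, and strict version
  have hmono : ∀ a b : ℝ, 0 ≤ a → a ≤ b → γ₂ * a ^ k ≤ γ₂ * b ^ k := by
    intro a b ha hab
    exact mul_le_mul_of_nonneg_left (Real.rpow_le_rpow ha hab hk.le) hγ₂.le
  -- the closed "good" set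
  have hC : IsClosed {x | x ∈ Set.Ici (0:ℝ) ∧ f x ∈ Set.Ici γ₁} :=
    hf.preimage_isClosed_of_isClosed isClosed_Ici isClosed_Ici
  -- Step 1 : f 0 ≥ γ₁
  have hf0' : γ₁ ≤ f 0 := by
    set c := min (σ / 2) γ₁ with hc
    have hcpos : 0 < c := lt_min (by linarith) hγ₁
    have hclt : c < f 0 := lt_of_le_of_lt (min_le_left _ _) (by linarith)
    have hev : ∀ᶠ t in nhdsWithin 0 (Set.Ici (0:ℝ)), c < f t :=
      (hf 0 (Set.self_mem_Ici)).eventually (eventually_gt_nhds hclt)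
    obtain ⟨u, hu, hsub⟩ := mem_nhdsGE_iff_exists_Icc_subset.mp hev
    have hu0 : (0:ℝ) < u := hu
    obtain ⟨β, hβ0, hβγ, hβv⟩ := hαof (min u (γ₂ * γ₁ ^ k)) (lt_min hu0 hT) (min_le_right _ _)
    set α := min β c with hα
    have hα0 : 0 < α := lt_min hβ0 hcpos
    have hαγ : α ≤ γ₁ := le_trans (min_le_left _ _) hβγ
    have hαsmall : γ₂ * α ^ k ≤ u := by
      calc γ₂ * α ^ k ≤ γ₂ * β ^ k := hmono α β hα0.le (min_le_left _ _)
        _ = min u (γ₂ * γ₁ ^ k) := hβv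
        _ ≤ u := min_le_left _ _
    have hbig : ∀ t ∈ Set.Icc (0:ℝ) (γ₂ * α ^ k), f t ≥ α := by
      intro t ht
      have : t ∈ Set.Icc (0:ℝ) u := ⟨ht.1, le_trans ht.2 hαsmall⟩
      exact le_trans (min_le_right β c) (hsub this).le
    have := hboot α hα0 hαγ hbig 0 ⟨le_refl _, by positivity⟩
    exact this
  -- The set S of good right endpoints
  set S := {s : ℝ | s ∈ Set.Icc (0:ℝ) (γ₂ * γ₁ ^ k) ∧ ∀ t ∈ Set.Icc (0:ℝ) s, γ₁ ≤ f t}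
    with hSdef
  have h0S : (0:ℝ) ∈ S := by
    refine ⟨⟨le_refl _, hT.le⟩, ?_⟩
    intro t ht
    have : t = 0 := le_antisymm ht.2 ht.1
    rw [this]; exact hf0'
  have hSne : S.Nonempty := ⟨0, h0S⟩
  have hSbdd : BddAbove S := ⟨γ₂ * γ₁ ^ k, fun s hs => hs.1.2⟩
  set s₀ := sSup S with hs₀def
  have hs₀0 : 0 ≤ s₀ := le_csSup hSbdd h0S
  have hs₀T : s₀ ≤ γ₂ * γ₁ ^ k := csSup_le hSne (fun s hs => hs.1.2)
  -- below s₀ : good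
  have hbelow : ∀ t : ℝ, 0 ≤ t → t < s₀ → γ₁ ≤ f t := by
    intro t ht hts
    obtain ⟨s, hsS, hts'⟩ := exists_lt_of_lt_csSup hSne hts
    exact hsS.2 t ⟨ht, hts'.le⟩
  -- at s₀ : good
  have hats₀ : γ₁ ≤ f s₀ := by
    rcases eq_or_lt_of_le hs₀0 with h | h
    · rw [← h]; exact hf0'
    · have hsub : Set.Ico (0:ℝ) s₀ ⊆ {x | x ∈ Set.Ici (0:ℝ) ∧ f x ∈ Set.Ici γ₁} := by
        intro t ht
        exact ⟨ht.1, hbelow t ht.1 ht.2⟩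
      have h2 : s₀ ∈ closure (Set.Ico (0:ℝ) s₀) := by
        rw [closure_Ico h.ne]; exact ⟨hs₀0, le_refl _⟩
      exact ((hC.closure_subset_iff.mpr hsub) h2).2
  have hs₀S : s₀ ∈ S := by
    refine ⟨⟨hs₀0, hs₀T⟩, ?_⟩
    intro t ht
    rcases lt_or_eq_of_le ht.2 with h | h
    · exact hbelow t ht.1 h
    · rw [h]; exact hats₀
  -- s₀ = T by contradiction
  have hfin : s₀ = γ₂ * γ₁ ^ k := by
    by_contra hne
    have hlt : s₀ < γ₂ * γ₁ ^ k := lt_of_le_of_ne hs₀T hne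
    -- pick β with γ₂ β^k strictly between s₀ and T
    set w := (s₀ + γ₂ * γ₁ ^ k) / 2 with hw
    have hws : s₀ < w := by rw [hw]; linarith
    have hwT : w < γ₂ * γ₁ ^ k := by rw [hw]; linarith
    have hw0 : 0 < w := lt_of_le_of_lt hs₀0 hws
    obtain ⟨β, hβ0, hβγ, hβv⟩ := hαof w hw0 hwT.le
    have hβlt : β < γ₁ := by
      rcases lt_or_eq_of_le hβγ with h | h
      · exact h
      · exfalso; rw [h] at hβv; exact absurd hβv hwT.ne'
    -- continuity at s₀ gives β-lower bound slightly to the right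
    have hcw : ContinuousWithinAt f (Set.Ici 0) s₀ := hf s₀ hs₀0
    have hev : ∀ᶠ t in nhdsWithin s₀ (Set.Ici (0:ℝ)), β < f t :=
      hcw.eventually (eventually_gt_nhds (lt_of_lt_of_le hβlt hats₀))
    have hev' : ∀ᶠ t in nhdsWithin s₀ (Set.Ici s₀), β < f t :=
      hev.filter_mono (nhdsWithin_mono s₀ (Set.Ici_subset_Ici.mpr hs₀0))
    obtain ⟨u, hu, hsub⟩ := mem_nhdsGE_iff_exists_Icc_subset.mp hev'
    have hus : s₀ < u := hu
    set v := min u w with hv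
    have hv0 : 0 < v := lt_min (lt_of_le_of_lt hs₀0 hus) hw0
    have hvs : s₀ < v := lt_min hus hws
    have hvT : v ≤ γ₂ * γ₁ ^ k := le_trans (min_le_right _ _) hwT.le
    obtain ⟨α, hα0, hαγ, hαv⟩ := hαof v hv0 hvT
    have hαβ : α ≤ β := by
      by_contra h
      push_neg at h
      have hlt2 : γ₂ * β ^ k < γ₂ * α ^ k :=
        mul_lt_mul_of_pos_left (Real.rpow_lt_rpow hβ0.le h hk) hγ₂
      rw [hβv, hαv] at hlt2
      exact absurd (min_le_right u w) (not_le.mpr hlt2)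
    have hbig : ∀ t ∈ Set.Icc (0:ℝ) (γ₂ * α ^ k), f t ≥ α := by
      intro t ht
      rw [hαv] at ht
      rcases le_or_gt t s₀ with h | h
      · exact le_trans (le_trans hαγ (hs₀S.2 t ⟨ht.1, h⟩)) (le_refl _)
      · have : t ∈ Set.Icc s₀ u := ⟨h.le, le_trans ht.2 (min_le_left _ _)⟩
        exact le_trans hαβ (hsub this).le
    have hgood := hboot α hα0 hαγ hbig
    have hvS : v ∈ S := by
      refine ⟨⟨hv0.le, hvT⟩, ?_⟩
      intro t ht
      exact hgood t (by rw [hαv]; exact ht)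
    exact absurd (le_csSup hSbdd hvS) (not_le.mpr hvs)
  intro t ht
  exact hs₀S.2 t (by rw [hfin]; exact ht)
end
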